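/- Let p be an odd prime and φ ∈ ℤ/pℤ with φ⁴ + 4φ² + 1 = 0. Set u = φ, v = -1 and define α, β by the Theorem B2 recurrences. Then for all k ≥ 0: α_{3k+1} = -φ, α_{3k+2}+α_{3k+3} = φ, α_{9k+2} = -φ⁻¹, α_{9k+5} = α_{3k+3}, α_{9k+8} = φ + φ⁻¹, β₁ = 1, β₂ = φ²+1, β_{3k+3} = φ⁻², β_{3k+4}+β_{3k+5} = φ²+1, β_{9k+1} = β_{3k+1}, β_{9k+4} = φ², β_{9k+7} = 1. In particular, β_i ≠ 0 for all i. -/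

import Mathlib

def ffun {R : Type*} [CommRing R] (u a : R) : ℕ → R
  | 0 => a
  | (n+1) =>
    if (n+1) % 3 = 0 then a
    else if (n+1) % 3 = 2 then u - a
    else u - ffun u a ((n+1)/3)
decreasing_by exact Nat.div_lt_self (Nat.succ_pos n) (by norm_num)

def gfun {R : Type*} [CommRing R] (c : R) : ℕ → R
  | 0 => 1
  | (n+1) =>
    if (n+1) % 3 = 1 then c
    else if (n+1) % 3 = 2 then 1
    else gfun c ((n+1)/3)
decreasing_by exact Nat.div_lt_self (Nat.succ_pos n) (by norm_num)

variable {R : Type*} [CommRing R] (u a c : R)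

lemma ffun_m0 (q : ℕ) : ffun u a (3*q) = a := by
  cases q with
  | zero => simp [ffun]
  | succ n =>
    rw [show 3*(n+1) = (3*n+2)+1 from by ring, ffun]
    rw [if_pos (by omega)]

lemma ffun_m1 (q : ℕ) : ffun u a (3*q+1) = u - ffun u a q := by
  rw [show 3*q+1 = (3*q)+1 from rfl, ffun]
  rw [if_neg (by omega), if_neg (by omega), show (3*q+1)/3 = q from by omega]

lemma ffun_m2 (q : ℕ) : ffun u a (3*q+2) = u - a := by
  rw [show 3*q+2 = (3*q+1)+1 from rfl, ffun]
  rw [if_neg (by omega), if_pos (by omega)]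

lemma gfun_m0 (q : ℕ) : gfun c (3*q) = gfun c q := by
  cases q with
  | zero => norm_num
  | succ n =>
    rw [show 3*(n+1) = (3*n+2)+1 from by ring, gfun]
    rw [if_neg (by omega), if_neg (by omega), show (3*n+2+1)/3 = n+1 from by omega]

lemma gfun_m1 (q : ℕ) : gfun c (3*q+1) = c := by
  rw [show 3*q+1 = (3*q)+1 from rfl, gfun, if_pos (by omega)]

lemma gfun_m2 (q : ℕ) : gfun c (3*q+2) = 1 := by
  rw [show 3*q+2 = (3*q+1)+1 from rfl, gfun]
  rw [if_neg (by omega), if_pos (by omega)]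

lemma ffun_val (m : ℕ) : ffun u a m = a ∨ ffun u a m = u - a := by
  induction m using Nat.strong_induction_on with
  | _ m ih =>
    have h3 : m % 3 = 0 ∨ m % 3 = 1 ∨ m % 3 = 2 := by omega
    rcases h3 with h | h | h
    · obtain ⟨q, rfl⟩ : ∃ q, m = 3*q := ⟨m/3, by omega⟩
      left; exact ffun_m0 u a q
    · obtain ⟨q, rfl⟩ : ∃ q, m = 3*q+1 := ⟨m/3, by omega⟩
      rw [ffun_m1]
      rcases ih q (by omega) with h | h
      · right; rw [h]
      · left; rw [h]; ring
    · obtain ⟨q, rfl⟩ : ∃ q, m = 3*q+2 := ⟨m/3, by omega⟩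
      right; exact ffun_m2 u a q

lemma gfun_val (m : ℕ) : gfun c m = 1 ∨ gfun c m = c := by
  induction m using Nat.strong_induction_on with
  | _ m ih =>
    have h3 : m % 3 = 0 ∨ m % 3 = 1 ∨ m % 3 = 2 := by omega
    rcases h3 with h | h | h
    · obtain ⟨q, rfl⟩ : ∃ q, m = 3*q := ⟨m/3, by omega⟩
      rcases q with _ | n
      · left; norm_num [gfun]
      · rw [gfun_m0]; exact ih (n+1) (by omega)
    · obtain ⟨q, rfl⟩ : ∃ q, m = 3*q+1 := ⟨m/3, by omega⟩
      right; exact gfun_m1 c q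
    · obtain ⟨q, rfl⟩ : ∃ q, m = 3*q+2 := ⟨m/3, by omega⟩
      left; exact gfun_m2 c q

def hfun {R : Type*} [CommRing R] (c : R) : ℕ → R :=
  fun m => if m = 0 then c+1 else c+1 - gfun c m

lemma ffun_zero : ffun u a 0 = a := by simp [ffun]

lemma gfun_zero : gfun c 0 = 1 := by simp [gfun]

lemma hfun_zero : hfun c 0 = c+1 := by simp [hfun]

lemma hfun_succ (n : ℕ) : hfun c (n+1) = c+1 - gfun c (n+1) := by simp [hfun]

lemma hfun_m0 (q : ℕ) : hfun c (3*q) = hfun c q := by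
  cases q with
  | zero => norm_num
  | succ n => rw [show 3*(n+1) = 3*n+2+1 from by ring, hfun_succ, hfun_succ,
      show 3*n+2+1 = 3*(n+1) from by ring, gfun_m0]

lemma hfun_m1 (q : ℕ) : hfun c (3*q+1) = 1 := by
  rw [show 3*q+1 = (3*q)+1 from rfl, hfun_succ, show (3*q)+1 = 3*q+1 from rfl, gfun_m1]; ring

lemma hfun_m2 (q : ℕ) : hfun c (3*q+2) = c := by
  rw [show 3*q+2 = (3*q+1)+1 from rfl, hfun_succ, show (3*q+1)+1 = 3*q+2 from rfl, gfun_m2]; ring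

lemma hfun_val (m : ℕ) : hfun c m = c+1 ∨ hfun c m = 1 ∨ hfun c m = c := by
  rcases m with _ | n
  · left; simp [hfun]
  · rw [hfun_succ]
    rcases gfun_val c (n+1) with h | h
    · right; right; rw [h]; ring
    · right; left; rw [h]; ring

theorem stmt3 (p : ℕ) [Fact p.Prime] (hodd : p ≠ 2)
    (φ : ZMod p) (hφ : φ^4 + 4*φ^2 + 1 = 0)
    (u v : ZMod p) (hu : u = φ) (hv : v = -1)
    (α β : ℕ → ZMod p)
    (hα1 : α 1 = -u) (hα2 : α 2 = u * (2*v - 1 - u^2) / (v - u^2))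
    (hα3 : α 3 = -u * (v - 1) / (v - u^2))
    (hβ1 : β 1 = 1) (hβ2 : β 2 = u^2 - v)
    (hβ3 : β 3 = (u^2 + u^4 + v^3 - 3*u^2*v) / (v - u^2)^2)
    (hrα4 : ∀ k : ℕ, α (3*k+4) = -u)
    (hrβ4 : ∀ k : ℕ, β (3*k+4) = β (k+2) / (β (3*k+3) * β (3*k+2)))
    (hrβ5 : ∀ k : ℕ, β (3*k+5) = u^2 - v - β (3*k+4))
    (hrα5 : ∀ k : ℕ, α (3*k+5) = u - (α (k+2) + u*v - α (3*k+2) * β (3*k+4)) / β (3*k+5))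
    (hrα6 : ∀ k : ℕ, α (3*k+6) = u - α (3*k+5))
    (hrβ6 : ∀ k : ℕ, β (3*k+6) = v - α (3*k+5) * α (3*k+6)) :
    (∀ k : ℕ, α (3*k+1) = -φ ∧ α (3*k+2) + α (3*k+3) = φ ∧
      α (9*k+2) = -φ⁻¹ ∧ α (9*k+5) = α (3*k+3) ∧ α (9*k+8) = φ + φ⁻¹) ∧
    β 1 = 1 ∧ β 2 = φ^2 + 1 ∧
    (∀ k : ℕ, β (3*k+3) = (φ^2)⁻¹ ∧ β (3*k+4) + β (3*k+5) = φ^2 + 1 ∧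
      β (9*k+1) = β (3*k+1) ∧ β (9*k+4) = φ^2 ∧ β (9*k+7) = 1) ∧
    (∀ i : ℕ, 1 ≤ i → β i ≠ 0) := by
  subst hu hv
  have hφ0 : u ≠ 0 := by
    intro h; rw [h] at hφ; norm_num at hφ
  have hc : u^2 ≠ 0 := pow_ne_zero _ hφ0
  have hφ1 : u^2 + 1 ≠ 0 := by
    intro h
    have h2 : (2 : ZMod p) = 0 := by linear_combination (u^2+3)*h - hφ
    have hp : p ∣ 2 := by
      exact_mod_cast (ZMod.natCast_eq_zero_iff 2 p).mp (by exact_mod_cast h2)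
    have hle := Nat.le_of_dvd (by norm_num) hp
    have h2le := (Fact.out : p.Prime).two_le
    omega
  have hvu : (-1 : ZMod p) - u^2 ≠ 0 := by
    intro h; exact hφ1 (by linear_combination -h)
  have hne : ∀ x : ℕ, hfun (u^2) x ≠ 0 := by
    intro x
    rcases hfun_val (u^2) x with h | h | h <;> rw [h]
    · exact hφ1
    · exact one_ne_zero
    · exact hc
  have step : ∀ k : ℕ, β (3*k+4) = gfun (u^2) (k+1) → α (3*k+5) = ffun u (-u⁻¹) (k+1) →
      (α (3*(k+1)+1) = -u ∧ α (3*(k+1)+2) = ffun u (-u⁻¹) (k+1) ∧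
       α (3*(k+1)+3) = u - ffun u (-u⁻¹) (k+1) ∧ β (3*(k+1)+1) = gfun (u^2) (k+1) ∧
       β (3*(k+1)+2) = hfun (u^2) (k+1) ∧ β (3*(k+1)+3) = (u^2)⁻¹) := by
    intro k b4 a5
    have a6 : α (3*k+6) = u - ffun u (-u⁻¹) (k+1) := by rw [hrα6 k, a5]
    have b5 : β (3*k+5) = hfun (u^2) (k+1) := by
      rw [hrβ5 k, b4, hfun_succ]; ring
    have b6 : β (3*k+6) = (u^2)⁻¹ := by
      rw [hrβ6 k, a5, a6]
      rcases ffun_val u (-u⁻¹) (k+1) with h | h <;> rw [h] <;> field_simp <;> ring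
    refine ⟨?_, ?_, ?_, ?_, ?_, ?_⟩
    · rw [show 3*(k+1)+1 = 3*k+4 from by ring, hrα4]
    · rw [show 3*(k+1)+2 = 3*k+5 from by ring, a5]
    · rw [show 3*(k+1)+3 = 3*k+6 from by ring, a6]
    · rw [show 3*(k+1)+1 = 3*k+4 from by ring, b4]
    · rw [show 3*(k+1)+2 = 3*k+5 from by ring, b5]
    · rw [show 3*(k+1)+3 = 3*k+6 from by ring, b6]
  have key : ∀ m : ℕ, α (3*m+1) = -u ∧ α (3*m+2) = ffun u (-u⁻¹) m ∧
      α (3*m+3) = u - ffun u (-u⁻¹) m ∧ β (3*m+1) = gfun (u^2) m ∧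
      β (3*m+2) = hfun (u^2) m ∧ β (3*m+3) = (u^2)⁻¹ := by
    intro m
    induction m using Nat.strong_induction_on with
    | _ m ih =>
      rcases m with _ | k
      · refine ⟨hα1, ?_, ?_, by rw [gfun_zero]; exact hβ1, ?_, ?_⟩
        · rw [hα2, ffun_zero u (-u⁻¹), div_eq_iff hvu]
          field_simp
          linear_combination -hφ
        · rw [hα3, ffun_zero u (-u⁻¹), div_eq_iff hvu]
          field_simp
          linear_combination hφ
        · rw [hβ2, hfun_zero (u^2)]; ring
        · rw [hβ3, div_eq_iff (pow_ne_zero _ hvu)]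
          field_simp
          linear_combination (u^2-1) * hφ
      · obtain ⟨hk1, hk2, hk3, hk4, hk5, hk6⟩ := ih k (by omega)
        have h3 : k % 3 = 0 ∨ k % 3 = 1 ∨ k % 3 = 2 := by omega
        rcases h3 with h | h | h
        · obtain ⟨q, rfl⟩ : ∃ q, k = 3*q := ⟨k/3, by omega⟩
          obtain ⟨hq1, hq2, hq3, hq4, hq5, hq6⟩ := ih q (by omega)
          have b4 : β (3*(3*q)+4) = gfun (u^2) (3*q+1) := by
            rw [hrβ4 (3*q), hq5, hk6, hk5, hfun_m0, gfun_m1,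
              div_eq_iff (mul_ne_zero (inv_ne_zero hc) (hne q))]
            field_simp
          have a5 : α (3*(3*q)+5) = ffun u (-u⁻¹) (3*q+1) := by
            have b5 : β (3*(3*q)+5) = 1 := by
              rw [hrβ5 (3*q), b4, gfun_m1]; ring
            rw [hrα5 (3*q), hq2, hk2, ffun_m0, b4, gfun_m1, b5, ffun_m1]
            field_simp
            ring
          exact step (3*q) b4 a5
        · obtain ⟨q, rfl⟩ : ∃ q, k = 3*q+1 := ⟨k/3, by omega⟩
          obtain ⟨hq1, hq2, hq3, hq4, hq5, hq6⟩ := ih q (by omega)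
          have b4 : β (3*(3*q+1)+4) = gfun (u^2) (3*q+1+1) := by
            rw [hrβ4 (3*q+1), show 3*q+1+2 = 3*q+3 from rfl, hq6, hk6, hk5, hfun_m1,
              show 3*q+1+1 = 3*q+2 from rfl, gfun_m2,
              div_eq_iff (mul_ne_zero (inv_ne_zero hc) one_ne_zero)]
            ring
          have a5 : α (3*(3*q+1)+5) = ffun u (-u⁻¹) (3*q+1+1) := by
            have b5 : β (3*(3*q+1)+5) = u^2 := by
              rw [hrβ5 (3*q+1), b4, show 3*q+1+1 = 3*q+2 from rfl, gfun_m2]; ring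
            rw [hrα5 (3*q+1), show 3*q+1+2 = 3*q+3 from rfl, hq3, hk2, ffun_m1, b4,
              show 3*q+1+1 = 3*q+2 from rfl, gfun_m2, b5, ffun_m2]
            field_simp
            ring
          exact step (3*q+1) b4 a5
        · obtain ⟨q, rfl⟩ : ∃ q, k = 3*q+2 := ⟨k/3, by omega⟩
          obtain ⟨hq1, hq2, hq3, hq4, hq5, hq6⟩ := ih (q+1) (by omega)
          have b4 : β (3*(3*q+2)+4) = gfun (u^2) (3*q+2+1) := by
            rw [hrβ4 (3*q+2), show 3*q+2+2 = 3*(q+1)+1 from by ring, hq4, hk6, hk5, hfun_m2,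
              show 3*q+2+1 = 3*(q+1) from by ring, gfun_m0,
              div_eq_iff (mul_ne_zero (inv_ne_zero hc) hc)]
            field_simp
          have a5 : α (3*(3*q+2)+5) = ffun u (-u⁻¹) (3*q+2+1) := by
            have b5 : β (3*(3*q+2)+5) = u^2+1 - gfun (u^2) (q+1) := by
              rw [hrβ5 (3*q+2), b4, show 3*q+2+1 = 3*(q+1) from by ring, gfun_m0]; ring
            rw [hrα5 (3*q+2), show 3*q+2+2 = 3*(q+1)+1 from by ring, hq1, hk2, ffun_m2, b4,
              show 3*q+2+1 = 3*(q+1) from by ring, gfun_m0, b5, ffun_m0]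
            rcases gfun_val (u^2) (q+1) with h | h <;> rw [h]
            · rw [show u^2+1 - (1:ZMod p) = u^2 from by ring]
              field_simp
              linear_combination hφ
            · rw [show u^2+1 - u^2 = (1:ZMod p) from by ring]
              field_simp
              linear_combination hφ
          exact step (3*q+2) b4 a5
  refine ⟨?_, hβ1, by rw [hβ2]; ring, ?_, ?_⟩
  · intro k
    obtain ⟨h1, h2, h3, _, _, _⟩ := key k
    obtain ⟨_, g2, _, _, _, _⟩ := key (3*k)
    obtain ⟨_, f2, _, _, _, _⟩ := key (3*k+1)
    obtain ⟨_, e2, _, _, _, _⟩ := key (3*k+2)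
    refine ⟨h1, by rw [h2, h3]; ring, ?_, ?_, ?_⟩
    · rw [show 9*k+2 = 3*(3*k)+2 from by ring, g2, ffun_m0]
    · rw [show 9*k+5 = 3*(3*k+1)+2 from by ring, f2, ffun_m1, h3]
    · rw [show 9*k+8 = 3*(3*k+2)+2 from by ring, e2, ffun_m2]; ring
  · intro k
    obtain ⟨_, _, _, h4, _, h6⟩ := key k
    obtain ⟨_, _, _, g4, g5, _⟩ := key (k+1)
    obtain ⟨_, _, _, i4, _, _⟩ := key (3*k)
    obtain ⟨_, _, _, j4, _, _⟩ := key (3*k+1)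
    obtain ⟨_, _, _, l4, _, _⟩ := key (3*k+2)
    refine ⟨h6, ?_, ?_, ?_, ?_⟩
    · rw [show 3*k+4 = 3*(k+1)+1 from by ring, show 3*k+5 = 3*(k+1)+2 from by ring,
        g4, g5, hfun_succ]
      ring
    · rw [show 9*k+1 = 3*(3*k)+1 from by ring, i4, gfun_m0, h4]
    · rw [show 9*k+4 = 3*(3*k+1)+1 from by ring, j4, gfun_m1]
    · rw [show 9*k+7 = 3*(3*k+2)+1 from by ring, l4, gfun_m2]
  · intro i hi
    obtain ⟨m, h | h | h⟩ : ∃ m, i = 3*m+1 ∨ i = 3*m+2 ∨ i = 3*m+3 := ⟨(i-1)/3, by omega⟩ <;>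
        subst h <;> obtain ⟨_, _, _, h4, h5, h6⟩ := key m
    · rw [h4]
      rcases gfun_val (u^2) m with h | h <;> rw [h]
      · exact one_ne_zero
      · exact hc
    · rw [h5]; exact hne m
    · rw [h6]; exact inv_ne_zero hc
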